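/- The coefficient of z³ in the formal power series (log(1+z)/z)^{24} is an integer (equivalently, u_3 ≡ 0 modulo ℤ). -/

import Mathlib

open PowerSeries

/-- The formal power series `log(1+z)/z = ∑_{n≥0} (-1)^n z^n/(n+1)` over `ℚ`. -/
noncomputable def logDiv : PowerSeries ℚ :=
  PowerSeries.mk fun n => (-1 : ℚ) ^ n / (n + 1)

lemma mulc (f g : PowerSeries ℚ) (a0 a1 a2 a3 b0 b1 b2 b3 : ℚ)
    (hf0 : PowerSeries.coeff (R := ℚ) 0 f = a0) (hf1 : PowerSeries.coeff (R := ℚ) 1 f = a1)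
    (hf2 : PowerSeries.coeff (R := ℚ) 2 f = a2) (hf3 : PowerSeries.coeff (R := ℚ) 3 f = a3)
    (hg0 : PowerSeries.coeff (R := ℚ) 0 g = b0) (hg1 : PowerSeries.coeff (R := ℚ) 1 g = b1)
    (hg2 : PowerSeries.coeff (R := ℚ) 2 g = b2) (hg3 : PowerSeries.coeff (R := ℚ) 3 g = b3) :
    PowerSeries.coeff (R := ℚ) 0 (f * g) = a0 * b0 ∧
    PowerSeries.coeff (R := ℚ) 1 (f * g) = a0 * b1 + a1 * b0 ∧
    PowerSeries.coeff (R := ℚ) 2 (f * g) = a0 * b2 + a1 * b1 + a2 * b0 ∧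
    PowerSeries.coeff (R := ℚ) 3 (f * g) = a0 * b3 + a1 * b2 + a2 * b1 + a3 * b0 := by
  refine ⟨?_, ?_, ?_, ?_⟩ <;>
    rw [PowerSeries.coeff_mul, Finset.Nat.sum_antidiagonal_eq_sum_range_succ_mk] <;>
    simp [Finset.sum_range_succ, hf0, hf1, hf2, hf3, hg0, hg1, hg2, hg3] <;> ring

/-- The coefficient of `z³` in `(log(1+z)/z)^{24}` is an integer (with `M_3 = 24`, this
says `u_3 ≡ 0` modulo `ℤ`). -/
theorem u_three : ∃ m : ℤ, PowerSeries.coeff (R := ℚ) 3 (logDiv ^ 24) = m := by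
  refine ⟨-351, ?_⟩
  have h0 : PowerSeries.coeff (R := ℚ) 0 logDiv = 1 := by simp [logDiv]
  have h1 : PowerSeries.coeff (R := ℚ) 1 logDiv = -1/2 := by norm_num [logDiv]
  have h2 : PowerSeries.coeff (R := ℚ) 2 logDiv = 1/3 := by norm_num [logDiv]
  have h3 : PowerSeries.coeff (R := ℚ) 3 logDiv = -1/4 := by norm_num [logDiv]
  obtain ⟨p0, p1, p2, p3⟩ := mulc logDiv logDiv _ _ _ _ _ _ _ _ h0 h1 h2 h3 h0 h1 h2 h3
  rw [show logDiv * logDiv = logDiv ^ 2 by ring] at p0 p1 p2 p3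
  obtain ⟨q0, q1, q2, q3⟩ := mulc _ _ _ _ _ _ _ _ _ _ p0 p1 p2 p3 p0 p1 p2 p3
  rw [show logDiv ^ 2 * logDiv ^ 2 = logDiv ^ 4 by ring] at q0 q1 q2 q3
  obtain ⟨r0, r1, r2, r3⟩ := mulc _ _ _ _ _ _ _ _ _ _ q0 q1 q2 q3 q0 q1 q2 q3
  rw [show logDiv ^ 4 * logDiv ^ 4 = logDiv ^ 8 by ring] at r0 r1 r2 r3
  obtain ⟨s0, s1, s2, s3⟩ := mulc _ _ _ _ _ _ _ _ _ _ r0 r1 r2 r3 r0 r1 r2 r3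
  rw [show logDiv ^ 8 * logDiv ^ 8 = logDiv ^ 16 by ring] at s0 s1 s2 s3
  obtain ⟨-, -, -, t3⟩ := mulc _ _ _ _ _ _ _ _ _ _ s0 s1 s2 s3 r0 r1 r2 r3
  rw [show logDiv ^ 16 * logDiv ^ 8 = logDiv ^ 24 by ring] at t3
  rw [t3]; norm_num
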